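/- For bundles π : E → B and π' : E' → B' and a morphism of Dirichlet functors between their extents corresponding to a bundle map (f : B → B', g : E → E'), the induced natural transformation is cartesian if and only if the square with sides π, π', f, g is a pullback square in Set. -/

import Mathlib

open CategoryTheory CategoryTheory.Limits Opposite

universe u

/-- The fiber `π⁻¹(b)` of a bundle `π : E → B` over `b ∈ B`. -/
abbrev fiber (π : Arrow (Type u)) (b : π.right) : Type u := { e : π.left // π.hom e = b }

/-- The Dirichlet extent functor `Set^↓ → Fun(Setᵒᵖ, Set)`, sending a bundle
`π : E → B` to `X ↦ Σ (b : B), (X → π⁻¹ b)` and a bundle map `(f, g)` to the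
natural transformation `(b, h) ↦ (f b, g ∘ h)`. -/
def DirExt : Arrow (Type u) ⥤ ((Type u)ᵒᵖ ⥤ Type u) where
  obj π :=
    { obj := fun X => Σ b : π.right, X.unop → fiber π b
      map := fun g => TypeCat.ofHom fun s => ⟨s.1, fun y => s.2 (g.unop y)⟩ }
  map {π π'} φ :=
    { app := fun X => TypeCat.ofHom fun s =>
        ⟨φ.right s.1, fun x =>
          ⟨φ.left (s.2 x).1, by
            have h := congrArg (fun k => k (s.2 x).1) φ.w
            simp only [Functor.id_map, types_comp_apply] at h
            rw [h]; exact congrArg φ.right (s.2 x).2⟩⟩ }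

/-- Elementwise characterization of pullback squares in `Type u`. -/
lemma types_isPullback_iff {P X Y Z : Type u} (fst : P ⟶ X) (snd : P ⟶ Y)
    (f : X ⟶ Z) (g : Y ⟶ Z) (comm : ∀ p, f (fst p) = g (snd p)) :
    IsPullback fst snd f g ↔
      ∀ x y, f x = g y → ∃! p, fst p = x ∧ snd p = y := by
  constructor
  · intro h x y hxy
    have hb : Function.Bijective ((PullbackCone.mk fst snd (by ext p; exact comm p)).toPullbackObj) :=
      PullbackCone.isLimitEquivBijective _
        (h.isLimit.ofIsoLimit (PullbackCone.ext (Iso.refl _) (by aesop) (by aesop)))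
    obtain ⟨p, hp, hp'⟩ := (Function.bijective_iff_existsUnique _).1 hb ⟨⟨x, y⟩, hxy⟩
    refine ⟨p, ⟨congrArg (fun q => q.1.1) hp, congrArg (fun q => q.1.2) hp⟩, ?_⟩
    rintro q ⟨h1, h2⟩
    exact hp' q (Subtype.ext (Prod.ext h1 h2))
  · intro h
    have hb : Function.Bijective ((PullbackCone.mk fst snd (by ext p; exact comm p)).toPullbackObj) := by
      rw [Function.bijective_iff_existsUnique]
      rintro ⟨⟨x, y⟩, hxy⟩
      obtain ⟨p, ⟨h1, h2⟩, hp'⟩ := h x y hxy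
      refine ⟨p, Subtype.ext (Prod.ext h1 h2), ?_⟩
      intro q hq
      exact hp' q ⟨congrArg (fun r => r.1.1) hq, congrArg (fun r => r.1.2) hq⟩
    exact IsPullback.of_isLimit ((PullbackCone.isLimitEquivBijective _).symm hb)

/-- Injectivity of the second component of `Sigma.mk` at a fixed base point. -/
lemma sigma_mk_snd_inj {α : Type*} {β : α → Type*} {a : α} {b₁ b₂ : β a}
    (h : Sigma.mk a b₁ = Sigma.mk a b₂) : b₁ = b₂ := by
  simpa using h

/-- Two elements of a sigma type whose fibers are functions out of `PEmpty`
are equal as soon as their first components agree. -/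
lemma sigma_empty_ext {α : Type u} {β : α → Type u}
    (s t : Σ a, PEmpty.{u+1} → β a) (h : s.1 = t.1) : s = t := by
  obtain ⟨a, f⟩ := s; obtain ⟨b, g⟩ := t
  cases h
  exact congrArg (Sigma.mk a) (funext fun x => x.elim)

/-- For bundles `π, π'` and a bundle map `φ = (g : E → E', f : B → B')`,
the induced natural transformation between the Dirichlet extents is cartesian
(all naturality squares are pullbacks) if and only if the square with sides
`π, π', f, g` is a pullback square in `Set`. -/
theorem dirExt_map_cartesian_iff_isPullback (π π' : Arrow (Type u)) (φ : π ⟶ π') :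
    (∀ (X X' : (Type u)ᵒᵖ) (g : X ⟶ X'),
        IsPullback ((DirExt.map φ).app X) ((DirExt.obj π).map g)
          ((DirExt.obj π').map g) ((DirExt.map φ).app X')) ↔
      IsPullback φ.left π.hom π'.hom φ.right := by
  have sq_comm : ∀ (X X' : (Type u)ᵒᵖ) (g : X ⟶ X')
      (p : (DirExt.obj π).obj X),
      (DirExt.obj π').map g ((DirExt.map φ).app X p)
        = (DirExt.map φ).app X' ((DirExt.obj π).map g p) := fun X X' g p => rfl
  have main_comm : ∀ e : π.left, π'.hom (φ.left e) = φ.right (π.hom e) :=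
    fun e => congrArg (fun k => k e) φ.w
  constructor
  · intro H
    rw [types_isPullback_iff _ _ _ _ main_comm]
    intro e' b he
    have H1 := H (op PUnit) (op PEmpty) (Quiver.Hom.op (TypeCat.ofHom fun (x : PEmpty) => x.elim))
    rw [types_isPullback_iff _ _ _ _ (sq_comm _ _ _)] at H1
    have compat :
        (DirExt.obj π').map (Quiver.Hom.op (TypeCat.ofHom fun (x : PEmpty) => x.elim))
            (⟨φ.right b, fun _ => ⟨e', he⟩⟩ : Σ b', PUnit.{u+1} → fiber π' b')
          = (DirExt.map φ).app (op PEmpty)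
            (⟨b, fun x => x.elim⟩ : Σ b₀, PEmpty.{u+1} → fiber π b₀) :=
      sigma_empty_ext _ _ rfl
    obtain ⟨a, ⟨ha1, ha2⟩, huniq⟩ := H1 ⟨φ.right b, fun _ => ⟨e', he⟩⟩ ⟨b, fun x => x.elim⟩ compat
    obtain ⟨b₀, h₀⟩ := a
    have hb : b₀ = b := congrArg Sigma.fst ha2
    subst hb
    have h2 : (fun x => (⟨φ.left (h₀ x).1, by
        rw [main_comm]; exact congrArg φ.right (h₀ x).2⟩ : fiber π' (φ.right b₀)))
        = fun _ => ⟨e', he⟩ := sigma_mk_snd_inj ha1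
    refine ⟨(h₀ PUnit.unit).1,
      ⟨congrArg Subtype.val (congrFun h2 PUnit.unit), (h₀ PUnit.unit).2⟩, ?_⟩
    rintro e ⟨he1, he2⟩
    have := huniq ⟨b₀, fun _ => ⟨e, he2⟩⟩
      ⟨congrArg (Sigma.mk (φ.right b₀)) (funext fun _ => Subtype.ext he1),
        sigma_empty_ext _ _ rfl⟩
    exact congrArg (fun s : Σ b₀, PUnit.{u+1} → fiber π b₀ => (s.2 PUnit.unit).1) this
  · intro hpb X X' g
    rw [types_isPullback_iff _ _ _ _ main_comm] at hpb
    rw [types_isPullback_iff _ _ _ _ (sq_comm _ _ _)]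
    rintro ⟨b', h'⟩ ⟨b, k⟩ hst
    have hb' : b' = φ.right b := congrArg Sigma.fst hst
    subst hb'
    have hk : (fun y => h' (g.unop y)) = fun x => (⟨φ.left (k x).1, by
        rw [main_comm]; exact congrArg φ.right (k x).2⟩ : fiber π' (φ.right b)) :=
      sigma_mk_snd_inj hst
    have fib : ∀ x : X.unop, ∃! e : π.left, φ.left e = (h' x).1 ∧ π.hom e = b :=
      fun x => hpb (h' x).1 b (h' x).2
    refine ⟨⟨b, fun x => ⟨(fib x).choose, (fib x).choose_spec.1.2⟩⟩,
      ⟨congrArg (Sigma.mk (φ.right b))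
        (funext fun x => Subtype.ext (fib x).choose_spec.1.1), ?_⟩, ?_⟩
    · refine congrArg (Sigma.mk b) (funext fun y => Subtype.ext ?_)
      exact ((fib (g.unop y)).choose_spec.2 (k y).1
        ⟨(congrArg Subtype.val (congrFun hk y)).symm, (k y).2⟩).symm
    · rintro ⟨b₁, h₁⟩ ⟨e1, e2⟩
      have hb1 : b₁ = b := congrArg Sigma.fst e2
      subst hb1
      refine congrArg (Sigma.mk b₁) (funext fun x => Subtype.ext ?_)
      have he1 : (fun x => (⟨φ.left (h₁ x).1, by
          rw [main_comm]; exact congrArg φ.right (h₁ x).2⟩ : fiber π' (φ.right b₁)))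
          = h' := sigma_mk_snd_inj e1
      exact (fib x).choose_spec.2 (h₁ x).1
        ⟨congrArg Subtype.val (congrFun he1 x), (h₁ x).2⟩
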